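/- Fix M ∈ ℕ. Let I be an interval with |I| > 2^{M+2}, and let J be a dyadic lagom interval, i.e., J ⊂ 𝔹_{M·2^M} with 2^{−M} ≤ |J| ≤ 2^M. Then 1 + |I|^{−1}|c(I) − c(J)| ≳ 1 + M^{−1}·rdist(I, 𝔹_{2^M}), with an absolute implicit constant (e.g., the left side is at least 1/4 of the right side when rdist(I, 𝔹_{M·2^M}) > 2, and at least 1/3 of the right side otherwise since then rdist(I, 𝔹_{2^M}) ≤ 2M). -/
import Mathlib


/-- `diam(I ∪ J)` for intervals given by centers and lengths. -/
noncomputable def diamUnion (c1 l1 c2 l2 : ℝ) : ℝ :=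
  max (c1 + l1 / 2) (c2 + l2 / 2) - min (c1 - l1 / 2) (c2 - l2 / 2)

/-- The relative distance `rdist(I,J) = diam(I ∪ J)/max(|I|,|J|)`. -/
noncomputable def rdistI (c1 l1 c2 l2 : ℝ) : ℝ := diamUnion c1 l1 c2 l2 / max l1 l2

/-- For an interval `I` with `|I| > 2^{M+2}` and a dyadic lagom interval `J`
(`J ⊆ 𝔹_{M·2^M}`, `2^{−M} ≤ |J| ≤ 2^M`), one has
`1 + |I|⁻¹|c(I) − c(J)| ≥ (1/4)(1 + M⁻¹ rdist(I, 𝔹_{2^M}))`. -/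
theorem statement12 (M : ℕ) (hM : 1 ≤ M) (cI lI cJ lJ : ℝ)
    (hlI : (2 : ℝ) ^ (M + 2) < lI) (hlJ : 0 < lJ)
    (hJlo : (2 : ℝ) ^ (-(M : ℤ)) ≤ lJ) (hJhi : lJ ≤ 2 ^ M)
    (hJsub : Set.Icc (cJ - lJ / 2) (cJ + lJ / 2) ⊆
      Set.Icc (-((M : ℝ) * 2 ^ M / 2)) ((M : ℝ) * 2 ^ M / 2)) :
    (1 / 4) * (1 + (M : ℝ)⁻¹ * rdistI cI lI 0 (2 ^ M)) ≤ 1 + |cI - cJ| / lI := by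
  have hm0 : (1:ℝ) ≤ (M:ℝ) := by exact_mod_cast hM
  have hm0' : (0:ℝ) < (M:ℝ) := by linarith
  have h2pos : (0:ℝ) < 2 ^ (M + 2) := by positivity
  have hl : (0:ℝ) < lI := lt_trans h2pos hlI
  have h2M : (2:ℝ) ^ M * 4 ≤ lI := by
    have h : (2:ℝ) ^ (M + 2) = 2 ^ M * 4 := by ring
    linarith [h ▸ hlI]
  have h2Mpos : (0:ℝ) < (2:ℝ) ^ M := by positivity
  have hcJmem := hJsub (Set.mem_Icc.mpr ⟨by linarith, by linarith⟩ : cJ ∈ Set.Icc (cJ - lJ / 2) (cJ + lJ / 2))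
  have hcJ : |cJ| ≤ (M:ℝ) * 2 ^ M / 2 := by
    rw [abs_le]
    exact ⟨(Set.mem_Icc.mp hcJmem).1, (Set.mem_Icc.mp hcJmem).2⟩
  have hmax : max lI ((2:ℝ) ^ M) = lI := max_eq_left (by linarith)
  have hD : diamUnion cI lI 0 (2 ^ M) ≤ 2 * |cI| + lI := by
    unfold diamUnion
    have h1 : max (cI + lI / 2) (0 + (2:ℝ) ^ M / 2) ≤ |cI| + lI / 2 :=
      max_le (by linarith [le_abs_self cI]) (by linarith [abs_nonneg cI])
    have h2 : -(|cI| + lI / 2) ≤ min (cI - lI / 2) (0 - (2:ℝ) ^ M / 2) :=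
      le_min (by linarith [neg_abs_le cI]) (by linarith [abs_nonneg cI])
    linarith
  have ha : |cI| ≤ |cI - cJ| + (M:ℝ) * 2 ^ M / 2 := by
    have := abs_sub_abs_le_abs_sub cI cJ
    linarith
  rw [rdistI, hmax, inv_mul_eq_div, div_div]
  have hkey : diamUnion cI lI 0 (2 ^ M) / (lI * (M:ℝ)) ≤ 3 + 4 * (|cI - cJ| / lI) := by
    rw [div_le_iff₀ (by positivity)]
    have hc : |cI - cJ| / lI * lI = |cI - cJ| := div_mul_cancel₀ _ (ne_of_gt hl)
    nlinarith [abs_nonneg (cI - cJ), mul_nonneg (abs_nonneg (cI - cJ)) (le_of_lt hm0'),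
      mul_le_mul_of_nonneg_left h2M (le_of_lt hm0')]
  have hnn : 0 ≤ |cI - cJ| / lI := by positivity
  linarith
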